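/- arXiv:1107.2681 — 2 statements merged into one kernel-verified Lean document; each statement's English description precedes it below -/
import Mathlib

section
/- Consider a control system Σ = (ℝ^n, U, 𝒰, f). If Σ is δ∃-GAS with metric d and KL function β, then the doubled control system Σ̂ = (ℝ^{2n}, U, 𝒰, f̂), where f̂((ξ₁,ξ₂),u) = (f(ξ₁,u), f(ξ₂,u)), is U∃GAS with respect to the diagonal set Δ = { z ∈ ℝ^{2n} : ∃ x ∈ ℝ^n, z = (x,x) }, equipped with the metric d̂((x₁,x₂),(x₁',x₂')) = d(x₁,x₁') + d(x₂,x₂') and the same KL function β: for every z = (x₁,x₂) ∈ ℝ^{2n}, every input υ ∈ 𝒰, and every t ≥ 0, d̂(ζ_{zυ}(t),Δ) ≤ β(d̂(z,Δ),t), where ζ_{zυ}(t) = (ξ_{x₁υ}(t), ξ_{x₂υ}(t)). -/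
open MeasureTheory Set Filter

/-- `ℝ^n` with the Euclidean norm. -/
abbrev Euc (n : ℕ) := EuclideanSpace ℝ (Fin n)

/-- `d : E × E → [0,∞)` is a metric on `E`. -/
def IsMetric {E : Type*} (d : E → E → ℝ) : Prop :=
  (∀ x y, 0 ≤ d x y) ∧ (∀ x y, d x y = 0 ↔ x = y) ∧
    (∀ x y, d x y = d y x) ∧ (∀ x y z, d x z ≤ d x y + d y z)

/-- The point-to-set distance `d(x,A) = inf_{y ∈ A} d(x,y)`. -/
noncomputable def setDist {E : Type*} (d : E → E → ℝ) (x : E) (A : Set E) : ℝ :=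
  ⨅ y : A, d x (y : E)

/-- A class `K∞` function `[0,∞) → [0,∞)`: continuous, strictly increasing,
`γ(0) = 0` and `γ(r) → ∞` as `r → ∞`. -/
def IsClassKInf (γ : ℝ → ℝ) : Prop :=
  ContinuousOn γ (Ici 0) ∧ γ 0 = 0 ∧ StrictMonoOn γ (Ici 0) ∧
    Tendsto γ atTop atTop

/-- A class `KL` function `[0,∞) × [0,∞) → [0,∞)`: continuous, `β(·,s)` of class `K∞`
for each fixed `s ≥ 0`, and for each fixed `r > 0`, `β(r,·)` decreasing to `0`. -/
def IsClassKL (β : ℝ → ℝ → ℝ) : Prop :=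
  ContinuousOn (fun p : ℝ × ℝ => β p.1 p.2) (Ici 0 ×ˢ Ici 0) ∧
    (∀ s, 0 ≤ s → IsClassKInf fun r => β r s) ∧
    (∀ r, 0 < r → AntitoneOn (β r) (Ici 0) ∧ Tendsto (β r) atTop (nhds 0))

/-- The metric `d̂` on `ℝ^{2n} = ℝ^n × ℝ^n` induced by a metric `d` on `ℝ^n`:
`d̂(z,z') = d(z₁,z₁') + d(z₂,z₂')`. -/
def dHat {E : Type*} (d : E → E → ℝ) (z z' : E × E) : ℝ :=
  d z.1 z'.1 + d z.2 z'.2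

/-- The diagonal set `Δ = {(x,x) : x ∈ E} ⊆ E × E`. -/
def diagSet (E : Type*) : Set (E × E) := {z | ∃ x, z = (x, x)}

/-- Regularity assumptions on the right-hand side of a control system
`Σ = (ℝ^n, U, 𝒰, f)`: `f` is continuous and Lipschitz in the state, uniformly in the
input, on every compact set of states. -/
def IsControlSystem {E I : Type*} [NormedAddCommGroup E] [NormedSpace ℝ E]
    [NormedAddCommGroup I] (f : E → I → E) (U : Set I) : Prop :=
  ContinuousOn (fun p : E × I => f p.1 p.2) (univ ×ˢ U) ∧
    ∀ Q : Set E, IsCompact Q → ∃ Z : ℝ, 0 < Z ∧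
      ∀ x ∈ Q, ∀ y ∈ Q, ∀ u ∈ U, ‖f x u - f y u‖ ≤ Z * ‖x - y‖

/-- An admissible open-loop input: a measurable function with values in `U`. -/
def AdmissibleInput {I : Type*} [MeasurableSpace I] (U : Set I) (υ : ℝ → I) : Prop :=
  Measurable υ ∧ ∀ t, υ t ∈ U

/-- `ξ` is a (forward-time) trajectory of `ẋ = f(x,υ(t))`, in Carathéodory
(integral) form, i.e. `ξ` is absolutely continuous and satisfies the ODE for
almost every `t ≥ 0`. -/
def IsTrajectory {E I : Type*} [NormedAddCommGroup E] [NormedSpace ℝ E]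
    (f : E → I → E) (υ : ℝ → I) (ξ : ℝ → E) : Prop :=
  ∀ t : ℝ, 0 ≤ t → ξ t = ξ 0 + ∫ s in (0:ℝ)..t, f (ξ s) (υ s)

/-- Forward completeness: from every initial state and admissible input there is a
trajectory defined on all of `[0,∞)`. -/
def ForwardComplete {E I : Type*} [NormedAddCommGroup E] [NormedSpace ℝ E]
    [MeasurableSpace I] (f : E → I → E) (U : Set I) : Prop :=
  ∀ υ, AdmissibleInput U υ → ∀ x : E, ∃ ξ, ξ 0 = x ∧ IsTrajectory f υ ξ

/-- The `δ∃-GAS` estimate with a given metric `d` and `KL` function `β`: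
`d(ξ_{xυ}(t),ξ_{x'υ}(t)) ≤ β(d(x,x'),t)`. -/
def DeltaGASWith {E I : Type*} [NormedAddCommGroup E] [NormedSpace ℝ E]
    [MeasurableSpace I] (f : E → I → E) (U : Set I)
    (d : E → E → ℝ) (β : ℝ → ℝ → ℝ) : Prop :=
  ∀ υ, AdmissibleInput U υ → ∀ ξ ξ', IsTrajectory f υ ξ → IsTrajectory f υ ξ' →
    ∀ t : ℝ, 0 ≤ t → d (ξ t) (ξ' t) ≤ β (d (ξ 0) (ξ' 0)) t

/-- The `U∃GAS` estimate w.r.t. a set `A`, with a given metric `d` and `KL` function `β`: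
`d(ξ_{xυ}(t),A) ≤ β(d(x,A),t)`. -/
def UGASWith {E I : Type*} [NormedAddCommGroup E] [NormedSpace ℝ E]
    [MeasurableSpace I] (f : E → I → E) (U : Set I) (A : Set E)
    (d : E → E → ℝ) (β : ℝ → ℝ → ℝ) : Prop :=
  ∀ υ, AdmissibleInput U υ → ∀ ξ, IsTrajectory f υ ξ →
    ∀ t : ℝ, 0 ≤ t → setDist d (ξ t) A ≤ β (setDist d (ξ 0) A) t

/-- `‖υ - υ'‖_∞`: the essential supremum of `‖υ(t) - υ'(t)‖` over `t ≥ 0`. -/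
noncomputable def supDist {I : Type*} [NormedAddCommGroup I] (υ υ' : ℝ → I) : ENNReal :=
  essSup (fun t => (‖υ t - υ' t‖₊ : ENNReal)) (volume.restrict (Ici (0:ℝ)))

/-- The `δ∃-ISS` estimate with metric `d`, `KL` function `β` and `K∞` function `γ`:
`d(ξ_{xυ}(t),ξ_{x'υ'}(t)) ≤ β(d(x,x'),t) + γ(‖υ-υ'‖_∞)` (for essentially bounded
input differences). -/
def DeltaISSWith {E I : Type*} [NormedAddCommGroup E] [NormedSpace ℝ E]
    [MeasurableSpace I] [NormedAddCommGroup I] (f : E → I → E) (U : Set I)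
    (d : E → E → ℝ) (β : ℝ → ℝ → ℝ) (γ : ℝ → ℝ) : Prop :=
  ∀ υ υ', AdmissibleInput U υ → AdmissibleInput U υ' → supDist υ υ' ≠ ⊤ →
    ∀ ξ ξ', IsTrajectory f υ ξ → IsTrajectory f υ' ξ' →
      ∀ t : ℝ, 0 ≤ t →
        d (ξ t) (ξ' t) ≤ β (d (ξ 0) (ξ' 0)) t + γ (supDist υ υ').toReal

/-- The max-form `δ∃-ISS` estimate:
`d(ξ_{xυ}(t),ξ_{x'υ'}(t)) ≤ max{β(d(x,x'),t), γ(‖υ-υ'‖_∞)}`. -/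
def DeltaISSMaxWith {E I : Type*} [NormedAddCommGroup E] [NormedSpace ℝ E]
    [MeasurableSpace I] [NormedAddCommGroup I] (f : E → I → E) (U : Set I)
    (d : E → E → ℝ) (β : ℝ → ℝ → ℝ) (γ : ℝ → ℝ) : Prop :=
  ∀ υ υ', AdmissibleInput U υ → AdmissibleInput U υ' → supDist υ υ' ≠ ⊤ →
    ∀ ξ ξ', IsTrajectory f υ ξ → IsTrajectory f υ' ξ' →
      ∀ t : ℝ, 0 ≤ t →
        d (ξ t) (ξ' t) ≤ max (β (d (ξ 0) (ξ' 0)) t) (γ (supDist υ υ').toReal)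

/-- A `U∃GAS` Lyapunov function w.r.t. a set `A`, equipped with a metric `d`. -/
def IsUGASLyapunovWith {E I : Type*} [NormedAddCommGroup E] [NormedSpace ℝ E]
    (f : E → I → E) (U : Set I) (A : Set E) (d : E → E → ℝ) (V : E → ℝ) : Prop :=
  ContDiff ℝ (⊤ : ℕ∞) V ∧ (∀ x, 0 ≤ V x) ∧
    ∃ α₁ α₂ : ℝ → ℝ, ∃ κ : ℝ, IsClassKInf α₁ ∧ IsClassKInf α₂ ∧ 0 < κ ∧
      (∀ x, α₁ (setDist d x A) ≤ V x ∧ V x ≤ α₂ (setDist d x A)) ∧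
      ∀ x, ∀ u ∈ U, fderiv ℝ V x (f x u) ≤ -κ * V x

/-- A `δ∃-GAS` Lyapunov function, equipped with a metric `d`. -/
def IsDeltaGASLyapunovWith {E I : Type*} [NormedAddCommGroup E] [NormedSpace ℝ E]
    (f : E → I → E) (U : Set I) (d : E → E → ℝ) (V : E × E → ℝ) : Prop :=
  ContDiff ℝ (⊤ : ℕ∞) V ∧ (∀ p, 0 ≤ V p) ∧
    ∃ α₁ α₂ : ℝ → ℝ, ∃ κ : ℝ, IsClassKInf α₁ ∧ IsClassKInf α₂ ∧ 0 < κ ∧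
      (∀ x x', α₁ (d x x') ≤ V (x, x') ∧ V (x, x') ≤ α₂ (d x x')) ∧
      ∀ x x', ∀ u ∈ U, fderiv ℝ V (x, x') (f x u, f x' u) ≤ -κ * V (x, x')

/-- A `δ∃-ISS` Lyapunov function, equipped with a metric `d`. -/
def IsDeltaISSLyapunovWith {E I : Type*} [NormedAddCommGroup E] [NormedSpace ℝ E]
    [NormedAddCommGroup I] (f : E → I → E) (U : Set I)
    (d : E → E → ℝ) (V : E × E → ℝ) : Prop :=
  ContDiff ℝ (⊤ : ℕ∞) V ∧ (∀ p, 0 ≤ V p) ∧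
    ∃ α₁ α₂ σ : ℝ → ℝ, ∃ κ : ℝ, IsClassKInf α₁ ∧ IsClassKInf α₂ ∧ IsClassKInf σ ∧ 0 < κ ∧
      (∀ x x', α₁ (d x x') ≤ V (x, x') ∧ V (x, x') ≤ α₂ (d x x')) ∧
      ∀ x x', ∀ u ∈ U, ∀ u' ∈ U,
        fderiv ℝ V (x, x') (f x u, f x' u') ≤ -κ * V (x, x') + σ ‖u - u'‖

/-- `sat` is the saturation (metric projection) map onto the closed convex set `U`:
`sat(u)` is the point of `U` closest to `u` (so `sat(u) = u` for `u ∈ U`). -/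
def IsSat {I : Type*} [NormedAddCommGroup I] (U : Set I) (sat : I → I) : Prop :=
  ∀ u, sat u ∈ U ∧ ∀ u' ∈ U, ‖sat u - u‖ ≤ ‖u' - u‖

/-- `ω` is locally essentially bounded on `[0,∞)`. -/
def LocEssBounded {I : Type*} [NormedAddCommGroup I] (ω : ℝ → I) : Prop :=
  ∀ T : ℝ, 0 < T → ∃ C : ℝ, ∀ᵐ t ∂(volume.restrict (Icc (0:ℝ) T)), ‖ω t‖ ≤ C

/-- An admissible disturbance input for the perturbed doubled system: a measurable,
locally essentially bounded function with values in `D`. -/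
def AdmissibleDisturbance {I : Type*} [NormedAddCommGroup I] [MeasurableSpace I]
    (D : Set I) (ω : ℝ → I) : Prop :=
  Measurable ω ∧ (∀ t, ω t ∈ D) ∧ LocEssBounded ω
lemma setDist_dHat_diag {E : Type*} (d : E → E → ℝ) (hd : IsMetric d) (x₁ x₂ : E) :
    setDist (dHat d) (x₁, x₂) (diagSet E) = d x₁ x₂ := by
  obtain ⟨hpos, heq, hsymm, htri⟩ := hd
  have hne : Nonempty (diagSet E) := ⟨⟨(x₂, x₂), ⟨x₂, rfl⟩⟩⟩
  unfold setDist
  apply le_antisymm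
  · calc (⨅ y : diagSet E, dHat d (x₁, x₂) (y : E × E))
        ≤ dHat d (x₁, x₂) ((⟨(x₂, x₂), ⟨x₂, rfl⟩⟩ : diagSet E) : E × E) := by
          apply ciInf_le
          exact ⟨0, fun r ⟨y, hy⟩ => hy ▸ add_nonneg (hpos _ _) (hpos _ _)⟩
      _ = d x₁ x₂ := by
          simp [dHat, (heq x₂ x₂).mpr rfl]
  · apply le_ciInf
    rintro ⟨⟨y₁, y₂⟩, x, hx⟩
    simp only
    obtain ⟨h1, h2⟩ : y₁ = x ∧ y₂ = x := by simpa [Prod.ext_iff] using hx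
    rw [h1, h2]
    calc d x₁ x₂ ≤ d x₁ x + d x x₂ := htri _ _ _
      _ = dHat d (x₁, x₂) (x, x) := by rw [dHat, hsymm x x₂]

/-- If `Σ` is `δ∃-GAS` with metric `d` and `KL` function `β`, then the
doubled system `Σ̂` with `f̂((ξ₁,ξ₂),u) = (f(ξ₁,u), f(ξ₂,u))` is `U∃GAS` with respect to
the diagonal `Δ`, equipped with the metric `d̂` and the same `β`: for every
`z = (x₁,x₂)`, every input `υ`, and every `t ≥ 0`,
`d̂(ζ_{zυ}(t),Δ) ≤ β(d̂(z,Δ),t)` where `ζ_{zυ}(t) = (ξ_{x₁υ}(t), ξ_{x₂υ}(t))`. -/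
theorem doubled_system_UGAS_of_deltaGAS {n m : ℕ}
    (f : Euc n → Euc m → Euc n) (U : Set (Euc m)) (hsys : IsControlSystem f U)
    (d : Euc n → Euc n → ℝ) (hd : IsMetric d)
    (β : ℝ → ℝ → ℝ) (hβ : IsClassKL β)
    (hfc : ForwardComplete f U) (hgas : DeltaGASWith f U d β) :
    ∀ υ, AdmissibleInput U υ →
      ∀ ξ₁ ξ₂, IsTrajectory f υ ξ₁ → IsTrajectory f υ ξ₂ →
        ∀ t : ℝ, 0 ≤ t →
          setDist (dHat d) (ξ₁ t, ξ₂ t) (diagSet (Euc n)) ≤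
            β (setDist (dHat d) (ξ₁ 0, ξ₂ 0) (diagSet (Euc n))) t := by
  intro υ hυ ξ₁ ξ₂ h1 h2 t ht
  rw [setDist_dHat_diag d hd, setDist_dHat_diag d hd]
  exact hgas υ hυ ξ₁ ξ₂ h1 h2 t ht
end

section
/- Consider a control system Σ = (ℝ^n, U, 𝒰, f) with U ⊆ ℝ^m closed and convex, which is δ∃-ISS with a metric d whose sections x ↦ d(x,y) are continuous with respect to the Euclidean topology, with the max-form estimate d(ξ_{xυ}(t), ξ_{x'υ'}(t)) ≤ max{ β(d(x,x'),t), γ(‖υ−υ'‖_∞) } for a KL function β and a K∞ function γ. Set α(r) = β(r,0) and assume α(r) > r for all r > 0. Let ρ be a K∞ function satisfying ρ(r) ≤ (1/2)·γ⁻¹( α⁻¹(r)/4 ) for all r ≥ 0, let d̂ be the metric on ℝ^{2n} given by d̂((x₁,x₂),(x₁',x₂')) = d(x₁,x₁') + d(x₂,x₂'), and let Δ be the diagonal set. Let Σ̂ = (ℝ^{2n}, U × B₁(0), 𝒟, f̂) be the perturbed doubled system with f̂((ξ₁,ξ₂),(ω₁,ω₂)) = ( f(ξ₁, sat_U(ω₁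 + ρ(d(ξ₁,ξ₂))·ω₂)), f(ξ₂, sat_U(ω₁ − ρ(d(ξ₁,ξ₂))·ω₂)) ). Then for every z ∈ ℝ^{2n}, every ω = (ω₁,ω₂) ∈ 𝒟, and every t ≥ 0, γ( ‖ 2·ω₂(t)·ρ( d̂(ζ_{zω}(t),Δ) ) ‖ ) ≤ d̂(z,Δ)/2, where ζ_{zω} is the trajectory of Σ̂ from z under input ω. -/
open MeasureTheory Set Filter

lemma sat_lip {I : Type*} [NormedAddCommGroup I] [InnerProductSpace ℝ I]
    {U : Set I} (hUconv : Convex ℝ U) {sat : I → I} (hsat : IsSat U sat) :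
    ∀ a b, ‖sat a - sat b‖ ≤ ‖a - b‖ := by
  have hproj : ∀ u : I, ∀ w ∈ U, inner ℝ (u - sat u) (w - sat u) ≤ (0:ℝ) := by
    intro u
    have h1 : ‖u - sat u‖ = ⨅ w : U, ‖u - (w:I)‖ := by
      apply le_antisymm
      · haveI : Nonempty U := ⟨⟨sat u, (hsat u).1⟩⟩
        apply le_ciInf
        intro w
        calc ‖u - sat u‖ = ‖sat u - u‖ := norm_sub_rev _ _
          _ ≤ ‖(w:I) - u‖ := (hsat u).2 w w.2
          _ = ‖u - (w:I)‖ := norm_sub_rev _ _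
      · exact ciInf_le ⟨0, by rintro r ⟨w, rfl⟩; positivity⟩ (⟨sat u, (hsat u).1⟩ : U)
    exact (norm_eq_iInf_iff_real_inner_le_zero hUconv (hsat u).1).1 h1
  intro a b
  set p := sat a
  set q := sat b
  have h1 : inner ℝ (a - p) (q - p) ≤ (0:ℝ) := hproj a q (hsat b).1
  have h2 : inner ℝ (b - q) (p - q) ≤ (0:ℝ) := hproj b p (hsat a).1
  have key : ‖p - q‖ * ‖p - q‖ ≤ ‖a - b‖ * ‖p - q‖ := by
    have e : (inner ℝ (p - q) (p - q) : ℝ) =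
        inner ℝ (a - b) (p - q) + inner ℝ (-(a - p)) (p - q) + inner ℝ (b - q) (p - q) := by
      rw [← inner_add_left, ← inner_add_left]
      congr 1
      abel
    have e2 : (inner ℝ (-(a - p)) (p - q) : ℝ) = inner ℝ (a - p) (q - p) := by
      rw [inner_neg_left, ← inner_neg_right]
      congr 1
      abel
    have cs : (inner ℝ (a - b) (p - q) : ℝ) ≤ ‖a - b‖ * ‖p - q‖ := real_inner_le_norm _ _
    have e3 := real_inner_self_eq_norm_mul_norm (p - q)
    nlinarith [e, e2, h1, h2]
  rcases eq_or_lt_of_le (norm_nonneg (p - q)) with h | h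
  · rw [← h]; exact norm_nonneg _
  · exact le_of_mul_le_mul_right key h

lemma dist_cont {E : Type*} [TopologicalSpace E] {d : E → E → ℝ} (hd : IsMetric d)
    (hsec : ∀ y : E, Continuous fun x => d x y) :
    Continuous fun p : E × E => d p.1 p.2 := by
  obtain ⟨hnn, heq, hsymm, htri⟩ := hd
  rw [continuous_iff_continuousAt]
  rintro ⟨a, b⟩
  rw [ContinuousAt, tendsto_iff_dist_tendsto_zero]
  have hb : Tendsto (fun p : E × E => d p.1 a + d p.2 b) (nhds (a, b)) (nhds 0) := by
    have h1 : Tendsto (fun p : E × E => d p.1 a) (nhds (a, b)) (nhds 0) := by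
      have := ((hsec a).comp continuous_fst).tendsto (a, b)
      simpa [Function.comp_def, (heq a a).2 rfl] using this
    have h2 : Tendsto (fun p : E × E => d p.2 b) (nhds (a, b)) (nhds 0) := by
      have := ((hsec b).comp continuous_snd).tendsto (a, b)
      simpa [Function.comp_def, (heq b b).2 rfl] using this
    simpa using h1.add h2
  apply squeeze_zero (fun p => dist_nonneg) _ hb
  rintro ⟨x, y⟩
  simp only [Real.dist_eq]
  rw [abs_le]
  constructor
  · have : d a b ≤ d a x + d x y + d y b := le_trans (htri a x b) (by
      have := htri x y b; linarith)
    linarith [hsymm a x, hsymm y b, this]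
  · have : d x y ≤ d x a + d a b + d b y := le_trans (htri x a y) (by
      have := htri a b y; linarith)
    linarith [hsymm b y, this]

lemma setDist_diag {E : Type*} [Nonempty E] {d : E → E → ℝ} (hd : IsMetric d) (z : E × E) :
    setDist (dHat d) z (diagSet E) = d z.1 z.2 := by
  obtain ⟨hnn, heq, hsymm, htri⟩ := hd
  haveI : Nonempty (diagSet E) := ⟨⟨(Classical.arbitrary E, Classical.arbitrary E), ⟨_, rfl⟩⟩⟩
  apply le_antisymm
  · have := ciInf_le (f := fun y : diagSet E => dHat d z (y : E × E))
      ⟨0, by rintro r ⟨w, rfl⟩; exact add_nonneg (hnn _ _) (hnn _ _)⟩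
      (⟨(z.2, z.2), ⟨z.2, rfl⟩⟩ : diagSet E)
    simpa [setDist, dHat, (heq z.2 z.2).2 rfl] using this
  · apply le_ciInf
    rintro ⟨p, x, rfl⟩
    show d z.1 z.2 ≤ d z.1 x + d z.2 x
    calc d z.1 z.2 ≤ d z.1 x + d x z.2 := htri _ _ _
      _ = d z.1 x + d z.2 x := by rw [hsymm x z.2]

lemma traj_unique {n m : ℕ} (f : Euc n → Euc m → Euc n) (U : Set (Euc m))
    (hsys : IsControlSystem f U) (υ : ℝ → Euc m) (hυU : ∀ s, υ s ∈ U)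
    (T : ℝ) (hT : 0 ≤ T) (y z : ℝ → Euc n)
    (hy : ∀ s ∈ Icc (0:ℝ) T, y s = y 0 + ∫ σ in (0:ℝ)..s, f (y σ) (υ σ))
    (hz : ∀ s ∈ Icc (0:ℝ) T, z s = z 0 + ∫ σ in (0:ℝ)..s, f (z σ) (υ σ))
    (hyint : IntervalIntegrable (fun σ => f (y σ) (υ σ)) volume 0 T)
    (hzint : IntervalIntegrable (fun σ => f (z σ) (υ σ)) volume 0 T)
    (h0 : y 0 = z 0) : ∀ s ∈ Icc (0:ℝ) T, y s = z s := by
  have hIcc : uIcc (0:ℝ) T = Icc 0 T := uIcc_of_le hT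
  have hcont : ∀ (w : ℝ → Euc n),
      (∀ s ∈ Icc (0:ℝ) T, w s = w 0 + ∫ σ in (0:ℝ)..s, f (w σ) (υ σ)) →
      IntervalIntegrable (fun σ => f (w σ) (υ σ)) volume 0 T →
      ContinuousOn w (Icc 0 T) := by
    intro w hw hwint
    have hio : IntegrableOn (fun σ => f (w σ) (υ σ)) (uIcc 0 T) volume := by
      rw [hIcc, integrableOn_Icc_iff_integrableOn_Ioc]
      exact (intervalIntegrable_iff_integrableOn_Ioc_of_le hT).1 hwint
    have := (intervalIntegral.continuousOn_primitive_interval hio)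
    rw [hIcc] at this
    exact (((continuousOn_const (c := w 0)).add this)).congr hw
  have hycont := hcont y hy hyint
  have hzcont := hcont z hz hzint
  have hQ : IsCompact (y '' Icc 0 T ∪ z '' Icc 0 T) :=
    (isCompact_Icc.image_of_continuousOn hycont).union
      (isCompact_Icc.image_of_continuousOn hzcont)
  obtain ⟨Z, hZpos, hZ⟩ := hsys.2 _ hQ
  set c : ℝ → ℝ := fun s => max (min s T) 0 with hc
  have hcmem : ∀ s, c s ∈ Icc (0:ℝ) T := fun s =>
    ⟨le_max_right _ _, max_le (min_le_right _ _) hT⟩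
  have hcid : ∀ s ∈ Icc (0:ℝ) T, c s = s := by
    intro s hs
    simp [hc, min_eq_left hs.2, max_eq_left hs.1]
  have hccont : Continuous c := (continuous_id.min continuous_const).max continuous_const
  set φ : ℝ → ℝ := fun s => ‖y (c s) - z (c s)‖ with hφ
  have hφcont : Continuous φ :=
    ((hycont.sub hzcont).norm).comp_continuous hccont hcmem
  have hφnn : ∀ s, 0 ≤ φ s := fun s => norm_nonneg _
  set ψ : ℝ → ℝ := fun s => ∫ σ in (0:ℝ)..s, φ σ with hψ
  have hψd : ∀ x : ℝ, HasDerivAt ψ (φ x) x := by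
    intro x
    exact intervalIntegral.integral_hasDerivAt_right
      (hφcont.intervalIntegrable _ _)
      (hφcont.stronglyMeasurableAtFilter _ _)
      hφcont.continuousAt
  have hψnn : ∀ x : ℝ, 0 ≤ x → 0 ≤ ψ x := by
    intro x hx
    exact intervalIntegral.integral_nonneg hx (fun u _ => hφnn u)
  have hineq : ∀ s ∈ Icc (0:ℝ) T, φ s ≤ Z * ψ s := by
    intro s hs
    have hsub : y s - z s = ∫ σ in (0:ℝ)..s, (f (y σ) (υ σ) - f (z σ) (υ σ)) := by
      rw [intervalIntegral.integral_sub
        (hyint.mono_set (by rw [hIcc, uIcc_of_le hs.1]; exact Icc_subset_Icc_right hs.2))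
        (hzint.mono_set (by rw [hIcc, uIcc_of_le hs.1]; exact Icc_subset_Icc_right hs.2))]
      rw [hy s hs, hz s hs, h0]
      abel
    have hb : ‖∫ σ in (0:ℝ)..s, (f (y σ) (υ σ) - f (z σ) (υ σ))‖ ≤
        ∫ σ in (0:ℝ)..s, Z * φ σ := by
      have habs : ‖∫ σ in (0:ℝ)..s, (f (y σ) (υ σ) - f (z σ) (υ σ))‖ ≤
          |∫ σ in (0:ℝ)..s, Z * φ σ| := by
        apply intervalIntegral.norm_integral_le_abs_of_norm_le
        · rw [ae_restrict_iff' measurableSet_uIoc]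
          filter_upwards with σ hσ
          rw [uIoc_of_le hs.1] at hσ
          have hσmem : σ ∈ Icc (0:ℝ) T := ⟨le_of_lt hσ.1, le_trans hσ.2 hs.2⟩
          have := hZ (y σ) (Or.inl ⟨σ, hσmem, rfl⟩) (z σ) (Or.inr ⟨σ, hσmem, rfl⟩)
            (υ σ) (hυU σ)
          rw [hφ]
          simpa [hcid σ hσmem] using this
        · exact (continuous_const.mul hφcont).intervalIntegrable _ _
      rw [abs_of_nonneg (intervalIntegral.integral_nonneg hs.1
        (fun u _ => mul_nonneg (le_of_lt hZpos) (hφnn u)))] at habs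
      exact habs
    have hint : (∫ σ in (0:ℝ)..s, Z * φ σ) = Z * ψ s := by
      rw [hψ]
      exact intervalIntegral.integral_const_mul _ _
    have hφs : φ s = ‖y s - z s‖ := by rw [hφ]; simp [hcid s hs]
    rw [hφs, hsub]
    calc ‖_‖ ≤ _ := hb
      _ = Z * ψ s := hint
  have hgron : ∀ x ∈ Icc (0:ℝ) T, ‖ψ x‖ ≤ gronwallBound 0 Z 0 (x - 0) := by
    apply norm_le_gronwallBound_of_norm_deriv_right_le
      (f := ψ) (f' := φ) (δ := 0) (K := Z) (ε := 0)
    · exact fun x _ => (hψd x).continuousAt.continuousWithinAt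
    · exact fun x _ => (hψd x).hasDerivWithinAt
    · simp [hψ]
    · intro x hx
      have h1 : φ x ≤ Z * ψ x := hineq x ⟨hx.1, le_of_lt hx.2⟩
      have h2 : 0 ≤ ψ x := hψnn x hx.1
      rw [Real.norm_eq_abs, Real.norm_eq_abs, abs_of_nonneg (hφnn x), abs_of_nonneg h2]
      linarith
  intro s hs
  have hψ0 : ‖ψ s‖ ≤ 0 := by
    have := hgron s hs
    rwa [gronwallBound_ε0, zero_mul] at this
  have hφ0 : φ s ≤ 0 := by
    have := hineq s hs
    have : φ s ≤ Z * ψ s := this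
    have hψz : ψ s = 0 := le_antisymm (le_trans (le_abs_self _) hψ0) (hψnn s hs.1)
    rw [hψz, mul_zero] at this
    exact this
  have : ‖y s - z s‖ = 0 := by
    have hφs : φ s = ‖y s - z s‖ := by rw [hφ]; simp [hcid s hs]
    rw [← hφs]
    exact le_antisymm hφ0 (hφnn s)
  have := norm_eq_zero.mp this
  exact sub_eq_zero.mp this

lemma traj_ext {n m : ℕ} (f : Euc n → Euc m → Euc n) (U : Set (Euc m))
    (hsys : IsControlSystem f U) (hUcl : IsClosed U)
    (υ : ℝ → Euc m) (hυU : ∀ s, υ s ∈ U)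
    (hmeasf : ∀ x : Euc n, Measurable fun σ => f x (υ σ))
    (T : ℝ) (hT : 0 ≤ T) (R : ℝ)
    (hυbdd : ∀ᵐ σ ∂(volume.restrict (Icc (0:ℝ) T)), ‖υ σ‖ ≤ R)
    (z ξ : ℝ → Euc n)
    (hz : ∀ s ∈ Icc (0:ℝ) T, z s = z 0 + ∫ σ in (0:ℝ)..s, f (z σ) (υ σ))
    (hzint : IntervalIntegrable (fun σ => f (z σ) (υ σ)) volume 0 T)
    (hξ : ∀ s : ℝ, 0 ≤ s → ξ s = ξ 0 + ∫ σ in (0:ℝ)..s, f (ξ σ) (υ σ))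
    (hξ0 : ξ 0 = z 0) : ∀ s ∈ Icc (0:ℝ) T, ξ s = z s := by
  set Fξ : ℝ → Euc n := fun σ => f (ξ σ) (υ σ) with hFξ
  set S : Set ℝ := {s | s ∈ Icc (0:ℝ) T ∧ IntervalIntegrable Fξ volume 0 s} with hS
  have hS0 : (0:ℝ) ∈ S := ⟨⟨le_rfl, hT⟩, IntervalIntegrable.refl⟩
  have hSne : S.Nonempty := ⟨0, hS0⟩
  have hSbdd : BddAbove S := ⟨T, fun s hs => hs.1.2⟩
  set b := sSup S with hb
  have hb0 : 0 ≤ b := le_csSup hSbdd hS0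
  have hbT : b ≤ T := csSup_le hSne fun s hs => hs.1.2
  -- on any s ∈ S, ξ = z on [0,s]
  have step1 : ∀ s ∈ S, ∀ σ ∈ Icc (0:ℝ) s, ξ σ = z σ := by
    rintro s ⟨hsmem, hsint⟩
    exact traj_unique f U hsys υ hυU s hsmem.1 ξ z
      (fun σ hσ => hξ σ hσ.1)
      (fun σ hσ => hz σ ⟨hσ.1, le_trans hσ.2 hsmem.2⟩)
      hsint
      (hzint.mono_set (by rw [uIcc_of_le hsmem.1, uIcc_of_le hT]; exact Icc_subset_Icc_right hsmem.2))
      hξ0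
  have step2 : ∀ σ : ℝ, 0 ≤ σ → σ < b → ξ σ = z σ := by
    intro σ hσ0 hσb
    obtain ⟨s, hsS, hσs⟩ := exists_lt_of_lt_csSup hSne hσb
    exact step1 s hsS σ ⟨hσ0, le_of_lt hσs⟩
  have hbS : b ∈ S := by
    refine ⟨⟨hb0, hbT⟩, ?_⟩
    rw [intervalIntegrable_iff_integrableOn_Ioc_of_le hb0]
    have hzI : IntegrableOn (fun σ => f (z σ) (υ σ)) (Ioc 0 b) volume := by
      have := hzint.mono_set (by rw [uIcc_of_le hb0, uIcc_of_le hT]; exact Icc_subset_Icc_right hbT)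
      exact (intervalIntegrable_iff_integrableOn_Ioc_of_le hb0).1 this
    apply hzI.congr
    have h1 : ∀ᵐ σ ∂(volume.restrict (Ioc (0:ℝ) b)), σ ∈ Ioc (0:ℝ) b :=
      ae_restrict_mem measurableSet_Ioc
    have h2 : ∀ᵐ σ ∂(volume.restrict (Ioc (0:ℝ) b)), σ ≠ b := by
      apply ae_restrict_of_ae
      rw [ae_iff]
      simp only [ne_eq, not_not]
      simp [Real.volume_singleton]
    filter_upwards [h1, h2] with σ hσ hne
    have : ξ σ = z σ := step2 σ (le_of_lt hσ.1) (lt_of_le_of_ne hσ.2 hne)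
    simp [hFξ, this]
  have hbeq : b = T := by
    by_contra hne
    have hbT' : b < T := lt_of_le_of_ne hbT hne
    have hnot : ∀ s, b < s → s ≤ T → ¬ IntervalIntegrable Fξ volume 0 s := by
      intro s hbs hsT hint
      exact absurd (le_csSup hSbdd ⟨⟨le_trans hb0 (le_of_lt hbs), hsT⟩, hint⟩)
        (not_le.mpr hbs)
    have hreset : ∀ s, b < s → s ≤ T → ξ s = ξ 0 := by
      intro s hbs hsT
      have := hξ s (le_trans hb0 (le_of_lt hbs))
      rwa [intervalIntegral.integral_undef (hnot s hbs hsT), add_zero] at this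
    -- Fξ is integrable on Ioc b T since ξ is frozen there
    have hK : IsCompact (({ξ 0} : Set (Euc n)) ×ˢ (U ∩ Metric.closedBall 0 R)) :=
      isCompact_singleton.prod ((isCompact_closedBall _ _).inter_left hUcl)
    obtain ⟨C, hC⟩ := hK.exists_bound_of_continuousOn
      (hsys.1.mono (prod_mono (subset_univ _) inter_subset_left))
    have hintBT : IntegrableOn Fξ (Ioc b T) volume := by
      have hmeas : AEStronglyMeasurable (fun σ => f (ξ 0) (υ σ))
          (volume.restrict (Ioc b T)) := ((hmeasf (ξ 0)).aestronglyMeasurable)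
      have hbdd : ∀ᵐ σ ∂(volume.restrict (Ioc b T)), ‖f (ξ 0) (υ σ)‖ ≤ C := by
        have hsub : Ioc b T ⊆ Icc 0 T := fun σ hσ => ⟨le_trans hb0 (le_of_lt hσ.1), hσ.2⟩
        have := ae_mono (Measure.restrict_mono hsub le_rfl) hυbdd
        filter_upwards [this] with σ hσ
        exact hC (ξ 0, υ σ) ⟨rfl, hυU σ, by simpa [Metric.mem_closedBall] using hσ⟩
      have hfrozen : Integrable (fun σ => f (ξ 0) (υ σ)) (volume.restrict (Ioc b T)) :=
        ⟨hmeas, HasFiniteIntegral.restrict_of_bounded (C := C) (by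
          exact lt_of_le_of_lt (measure_mono Ioc_subset_Icc_self) (by
            rw [Real.volume_Icc]; exact ENNReal.ofReal_lt_top)) hbdd⟩
      apply hfrozen.congr
      filter_upwards [ae_restrict_mem measurableSet_Ioc] with σ hσ
      rw [hFξ]
      simp [hreset σ hσ.1 hσ.2]
    have : IntervalIntegrable Fξ volume 0 T :=
      hbS.2.trans ((intervalIntegrable_iff_integrableOn_Ioc_of_le (le_of_lt hbT')).2 hintBT)
    exact hnot T hbT' le_rfl this
  intro s hs
  exact step1 b hbS s (hbeq ▸ hs)

/-- Under the max-form `δ∃-ISS` estimate with `β`, `γ`, with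
`α(r) = β(r,0) > r` for `r > 0`, and `ρ` a `K∞` function with
`ρ(r) ≤ (1/2)γ⁻¹(α⁻¹(r)/4)`, every trajectory `ζ` of the perturbed doubled system `Σ̂`
satisfies `γ(‖2·ω₂(t)·ρ(d̂(ζ(t),Δ))‖) ≤ d̂(z,Δ)/2` for all `t ≥ 0`. -/
theorem perturbed_doubled_system_gain_bound {n m : ℕ}
    (f : Euc n → Euc m → Euc n) (U : Set (Euc m)) (hsys : IsControlSystem f U)
    (hUcl : IsClosed U) (hUconv : Convex ℝ U)
    (d : Euc n → Euc n → ℝ) (hd : IsMetric d)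
    (hsec : ∀ y : Euc n, Continuous fun x => d x y)
    (β : ℝ → ℝ → ℝ) (hβ : IsClassKL β) (γ : ℝ → ℝ) (hγ : IsClassKInf γ)
    (hfc : ForwardComplete f U) (hiss : DeltaISSMaxWith f U d β γ)
    (hα : ∀ r : ℝ, 0 < r → r < β r 0)
    (γinv αinv : ℝ → ℝ)
    (hγinv : ∀ r : ℝ, 0 ≤ r → 0 ≤ γinv r ∧ γ (γinv r) = r)
    (hαinv : ∀ r : ℝ, 0 ≤ r → 0 ≤ αinv r ∧ β (αinv r) 0 = r)
    (ρ : ℝ → ℝ) (hρK : IsClassKInf ρ)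
    (hρ : ∀ r : ℝ, 0 ≤ r → ρ r ≤ (1 / 2) * γinv (αinv r / 4))
    (sat : Euc m → Euc m) (hsat : IsSat U sat) :
    ∀ ω : ℝ → Euc m × Euc m,
      AdmissibleDisturbance (U ×ˢ Metric.closedBall (0 : Euc m) 1) ω →
      ∀ ζ : ℝ → Euc n × Euc n,
        IsTrajectory
          (fun z w => (f z.1 (sat (w.1 + ρ (d z.1 z.2) • w.2)),
                       f z.2 (sat (w.1 - ρ (d z.1 z.2) • w.2)))) ω ζ →
        ∀ t : ℝ, 0 ≤ t →
          γ ‖(2 * ρ (setDist (dHat d) (ζ t) (diagSet (Euc n)))) • (ω t).2‖ ≤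
            setDist (dHat d) (ζ 0) (diagSet (Euc n)) / 2 := by
  intro ω hω ζ hζ t ht
  obtain ⟨hωmeas, hωmem, hωloc⟩ := hω
  obtain ⟨hnn, heq, hsymm, htri⟩ := id hd
  set g : ℝ → ℝ := fun s => d (ζ s).1 (ζ s).2 with hg
  have hgnn : ∀ s, 0 ≤ g s := fun s => hnn _ _
  have hsd : ∀ s : ℝ, setDist (dHat d) (ζ s) (diagSet (Euc n)) = g s :=
    fun s => setDist_diag hd (ζ s)
  rw [hsd t, hsd 0]
  -- monotonicity helpers
  have hγmono : ∀ a b : ℝ, 0 ≤ a → a ≤ b → γ a ≤ γ b := fun a b ha hab =>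
    hγ.2.2.1.monotoneOn (mem_Ici.2 ha) (mem_Ici.2 (le_trans ha hab)) hab
  have hρmono : ∀ a b : ℝ, 0 ≤ a → a ≤ b → ρ a ≤ ρ b := fun a b ha hab =>
    hρK.2.2.1.monotoneOn (mem_Ici.2 ha) (mem_Ici.2 (le_trans ha hab)) hab
  have hρnn : ∀ r : ℝ, 0 ≤ r → 0 ≤ ρ r := by
    intro r hr
    have h := hρmono 0 r le_rfl hr
    rwa [hρK.2.1] at h
  have hβ0mono : StrictMonoOn (fun r => β r 0) (Ici 0) := (hβ.2.1 0 le_rfl).2.2.1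
  have hαinvα : ∀ c : ℝ, 0 < c → αinv (β c 0) = c := by
    intro c hc
    have hA0 : (0:ℝ) ≤ β c 0 := le_of_lt (lt_trans hc (hα c hc))
    obtain ⟨h1, h2⟩ := hαinv (β c 0) hA0
    exact hβ0mono.injOn (mem_Ici.2 h1) (mem_Ici.2 (le_of_lt hc)) h2
  have hργ : ∀ c : ℝ, 0 < c → γ (2 * ρ (β c 0)) ≤ c / 4 := by
    intro c hc
    have hA0 : (0:ℝ) ≤ β c 0 := le_of_lt (lt_trans hc (hα c hc))
    have h1 : 2 * ρ (β c 0) ≤ γinv (αinv (β c 0) / 4) := by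
      have := hρ (β c 0) hA0; linarith
    rw [hαinvα c hc] at h1
    have hc4 : (0:ℝ) ≤ c / 4 := by linarith
    obtain ⟨hγi0, hγie⟩ := hγinv (c/4) hc4
    calc γ (2 * ρ (β c 0)) ≤ γ (γinv (c/4)) :=
          hγmono _ _ (by have := hρnn _ hA0; linarith) h1
      _ = c/4 := hγie
  have hω2 : ∀ s : ℝ, ‖(ω s).2‖ ≤ 1 := by
    intro s
    have := (hωmem s).2
    rwa [Metric.mem_closedBall, dist_zero_right] at this
  have hζ' : ∀ T : ℝ, 0 ≤ T → ζ T = ζ 0 +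
      ∫ σ in (0:ℝ)..T, (f (ζ σ).1 (sat ((ω σ).1 + ρ (d (ζ σ).1 (ζ σ).2) • (ω σ).2)),
        f (ζ σ).2 (sat ((ω σ).1 - ρ (d (ζ σ).1 (ζ σ).2) • (ω σ).2))) := hζ
  set F : ℝ → Euc n × Euc n := fun s =>
    (f (ζ s).1 (sat ((ω s).1 + ρ (d (ζ s).1 (ζ s).2) • (ω s).2)),
     f (ζ s).2 (sat ((ω s).1 - ρ (d (ζ s).1 (ζ s).2) • (ω s).2))) with hF
  have hsatlip := sat_lip hUconv hsat
  have hsatcont : Continuous sat := by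
    have hl : LipschitzWith 1 sat := LipschitzWith.of_dist_le_mul (fun a b => by
      rw [dist_eq_norm, dist_eq_norm, NNReal.coe_one, one_mul]; exact hsatlip a b)
    exact hl.continuous
  -- KEY invariant
  have key : ∀ c : ℝ, g 0 < c → g t ≤ β c 0 := by
    intro c hc
    have hc0 : 0 < c := lt_of_le_of_lt (hgnn 0) hc
    have hcA : c < β c 0 := hα c hc0
    by_cases hFint : IntervalIntegrable F volume 0 t
    case neg =>
      have hz : ζ t = ζ 0 := by
        have h := hζ' t ht
        rwa [intervalIntegral.integral_undef hFint, add_zero] at h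
      have : g t = g 0 := by rw [hg]; simp only [hz]
      rw [this]
      exact le_of_lt (lt_trans hc hcA)
    case pos =>
    have hIccut : uIcc (0:ℝ) t = Icc 0 t := uIcc_of_le ht
    have hFIoc : IntegrableOn F (uIcc 0 t) volume := by
      rw [hIccut, integrableOn_Icc_iff_integrableOn_Ioc]
      exact (intervalIntegrable_iff_integrableOn_Ioc_of_le ht).1 hFint
    have hζcont : ContinuousOn ζ (Icc 0 t) := by
      have hp := intervalIntegral.continuousOn_primitive_interval hFIoc
      rw [hIccut] at hp
      exact ((continuousOn_const (c := ζ 0)).add hp).congr (fun s hs => hζ' s hs.1)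
    have hgcont : ContinuousOn g (Icc 0 t) :=
      (dist_cont hd hsec).comp_continuousOn hζcont
    by_contra hgt
    push_neg at hgt
    set A := β c 0 with hA
    set K : Set ℝ := Icc 0 t ∩ g ⁻¹' (Ici A) with hK
    have hKcl : IsClosed K := hgcont.preimage_isClosed_of_isClosed isClosed_Icc isClosed_Ici
    have hKne : K.Nonempty := ⟨t, ⟨⟨ht, le_rfl⟩, le_of_lt hgt⟩⟩
    have hKbdd : BddBelow K := ⟨0, fun s hs => hs.1.1⟩
    set τ := sInf K with hτ
    have hτK : τ ∈ K := hKcl.csInf_mem hKne hKbdd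
    have hτmem : τ ∈ Icc (0:ℝ) t := hτK.1
    have hgτ : A ≤ g τ := hτK.2
    have hτpos : 0 < τ := by
      rcases lt_or_eq_of_le hτmem.1 with h | h
      · exact h
      · exfalso; rw [← h] at hgτ; linarith
    have hlt : ∀ s : ℝ, 0 ≤ s → s < τ → g s < A := by
      intro s h0 hsτ
      by_contra h
      push_neg at h
      have hsK : s ∈ K := ⟨⟨h0, le_trans (le_of_lt hsτ) hτmem.2⟩, h⟩
      exact absurd (csInf_le hKbdd hsK) (not_le.mpr hsτ)
    have hleA : ∀ s ∈ Icc (0:ℝ) τ, g s ≤ A := by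
      intro s hs
      rcases lt_or_eq_of_le hs.2 with h | h
      · exact le_of_lt (hlt s hs.1 h)
      · rw [h]
        have hclos : τ ∈ closure (Ico 0 τ) := by
          rw [closure_Ico (ne_of_lt hτpos)]
          exact ⟨le_of_lt hτpos, le_rfl⟩
        haveI : (nhdsWithin τ (Ico 0 τ)).NeBot := mem_closure_iff_nhdsWithin_neBot.1 hclos
        have hcw : Tendsto g (nhdsWithin τ (Ico 0 τ)) (nhds (g τ)) :=
          (hgcont τ hτmem).mono (fun x hx => ⟨hx.1, le_trans (le_of_lt hx.2) hτmem.2⟩)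
        exact le_of_tendsto hcw (eventually_mem_nhdsWithin.mono
          fun u hu => le_of_lt (hlt u hu.1 hu.2))
    -- frozen inputs
    set cl : ℝ → ℝ := fun s => max (min s τ) 0 with hcl
    have hclmem : ∀ s : ℝ, cl s ∈ Icc (0:ℝ) τ := fun s =>
      ⟨le_max_right _ _, max_le (min_le_right _ _) (le_of_lt hτpos)⟩
    have hclid : ∀ s ∈ Icc (0:ℝ) τ, cl s = s := by
      intro s hs
      simp [hcl, min_eq_left hs.2, max_eq_left hs.1]
    have hclcont : Continuous cl := (continuous_id.min continuous_const).max continuous_const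
    have hclmeas : Measurable cl := hclcont.measurable
    have hsubt : Icc (0:ℝ) τ ⊆ Icc 0 t := Icc_subset_Icc_right hτmem.2
    have hgcl : Continuous fun s => g (cl s) :=
      hgcont.comp_continuous hclcont (fun s => hsubt (hclmem s))
    set θ : ℝ → ℝ := fun s => ρ (g (cl s)) with hθ
    have hθcont : Continuous θ :=
      hρK.1.comp_continuous hgcl (fun s => mem_Ici.2 (hgnn _))
    have hθnn : ∀ s, 0 ≤ θ s := fun s => hρnn _ (hgnn _)
    have hθle : ∀ s, θ s ≤ ρ A := fun s => hρmono _ _ (hgnn _) (hleA _ (hclmem s))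
    have hA0 : (0:ℝ) ≤ A := le_of_lt (lt_trans hc0 hcA)
    have hρA0 : 0 ≤ ρ A := hρnn _ hA0
    set υ1 : ℝ → Euc m := fun s => sat ((ω (cl s)).1 + θ s • (ω (cl s)).2) with hυ1
    set υ2 : ℝ → Euc m := fun s => sat ((ω (cl s)).1 - θ s • (ω (cl s)).2) with hυ2
    have hωcl : Measurable fun s => ω (cl s) := hωmeas.comp hclmeas
    have hυ1meas : Measurable υ1 := hsatcont.measurable.comp
      ((measurable_fst.comp hωcl).add (hθcont.measurable.smul (measurable_snd.comp hωcl)))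
    have hυ2meas : Measurable υ2 := hsatcont.measurable.comp
      ((measurable_fst.comp hωcl).sub (hθcont.measurable.smul (measurable_snd.comp hωcl)))
    have hadm1 : AdmissibleInput U υ1 := ⟨hυ1meas, fun s => (hsat _).1⟩
    have hadm2 : AdmissibleInput U υ2 := ⟨hυ2meas, fun s => (hsat _).1⟩
    have hsmulbd : ∀ s : ℝ, ‖θ s • (ω (cl s)).2‖ ≤ ρ A := by
      intro s
      rw [norm_smul, Real.norm_eq_abs, abs_of_nonneg (hθnn s)]
      calc θ s * ‖(ω (cl s)).2‖ ≤ θ s * 1 :=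
            mul_le_mul_of_nonneg_left (hω2 _) (hθnn s)
        _ = θ s := mul_one _
        _ ≤ ρ A := hθle s
    have hdiff : ∀ s : ℝ, ‖υ1 s - υ2 s‖ ≤ 2 * ρ A := by
      intro s
      calc ‖υ1 s - υ2 s‖ ≤
          ‖((ω (cl s)).1 + θ s • (ω (cl s)).2) - ((ω (cl s)).1 - θ s • (ω (cl s)).2)‖ :=
            hsatlip _ _
        _ = ‖θ s • (ω (cl s)).2 + θ s • (ω (cl s)).2‖ := by congr 1; abel
        _ ≤ ‖θ s • (ω (cl s)).2‖ + ‖θ s • (ω (cl s)).2‖ := norm_add_le _ _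
        _ ≤ ρ A + ρ A := add_le_add (hsmulbd s) (hsmulbd s)
        _ = 2 * ρ A := by ring
    have hsup : supDist υ1 υ2 ≤ ENNReal.ofReal (2 * ρ A) := by
      refine essSup_le_of_ae_le _ ?_
      apply Filter.Eventually.of_forall
      intro s
      show (‖υ1 s - υ2 s‖₊ : ENNReal) ≤ ENNReal.ofReal (2 * ρ A)
      rw [← enorm_eq_nnnorm, ← ofReal_norm]
      exact ENNReal.ofReal_le_ofReal (hdiff s)
    have hsupne : supDist υ1 υ2 ≠ ⊤ := ne_top_of_le_ne_top ENNReal.ofReal_ne_top hsup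
    have hsupreal : (supDist υ1 υ2).toReal ≤ 2 * ρ A := by
      have h := ENNReal.toReal_mono ENNReal.ofReal_ne_top hsup
      rwa [ENNReal.toReal_ofReal (by linarith)] at h
    -- trajectories of the frozen system
    obtain ⟨ξ1, hξ10, hξ1traj⟩ := hfc υ1 hadm1 ((ζ 0).1)
    obtain ⟨ξ2, hξ20, hξ2traj⟩ := hfc υ2 hadm2 ((ζ 0).2)
    have hFτ : IntervalIntegrable F volume 0 τ := hFint.mono_set
      (by rw [uIcc_of_le hτmem.1, hIccut]; exact Icc_subset_Icc_right hτmem.2)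
    -- component equations of ζ on [0,τ]
    have hF1eq : ∀ σ ∈ Icc (0:ℝ) τ, (F σ).1 = f ((ζ σ).1) (υ1 σ) := by
      intro σ hσ
      simp only [hF, hυ1, hθ, hclid σ hσ, hg]
    have hF2eq : ∀ σ ∈ Icc (0:ℝ) τ, (F σ).2 = f ((ζ σ).2) (υ2 σ) := by
      intro σ hσ
      simp only [hF, hυ2, hθ, hclid σ hσ, hg]
    have hζ1eq : ∀ s ∈ Icc (0:ℝ) τ,
        (ζ s).1 = (ζ 0).1 + ∫ σ in (0:ℝ)..s, f ((ζ σ).1) (υ1 σ) := by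
      intro s hs
      have hFs : IntervalIntegrable F volume 0 s := hFτ.mono_set
        (by rw [uIcc_of_le hs.1, uIcc_of_le hτmem.1]; exact Icc_subset_Icc_right hs.2)
      have h1 : (∫ σ in (0:ℝ)..s, F σ).1 = ∫ σ in (0:ℝ)..s, (F σ).1 :=
        (ContinuousLinearMap.intervalIntegral_comp_comm
          (ContinuousLinearMap.fst ℝ (Euc n) (Euc n)) hFs).symm
      have h2 : (∫ σ in (0:ℝ)..s, (F σ).1) = ∫ σ in (0:ℝ)..s, f ((ζ σ).1) (υ1 σ) := by
        apply intervalIntegral.integral_congr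
        intro σ hσ
        rw [uIcc_of_le hs.1] at hσ
        exact hF1eq σ ⟨hσ.1, le_trans hσ.2 hs.2⟩
      have h := congrArg Prod.fst (hζ' s hs.1)
      rw [Prod.fst_add, h1, h2] at h
      exact h
    have hζ2eq : ∀ s ∈ Icc (0:ℝ) τ,
        (ζ s).2 = (ζ 0).2 + ∫ σ in (0:ℝ)..s, f ((ζ σ).2) (υ2 σ) := by
      intro s hs
      have hFs : IntervalIntegrable F volume 0 s := hFτ.mono_set
        (by rw [uIcc_of_le hs.1, uIcc_of_le hτmem.1]; exact Icc_subset_Icc_right hs.2)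
      have h1 : (∫ σ in (0:ℝ)..s, F σ).2 = ∫ σ in (0:ℝ)..s, (F σ).2 :=
        (ContinuousLinearMap.intervalIntegral_comp_comm
          (ContinuousLinearMap.snd ℝ (Euc n) (Euc n)) hFs).symm
      have h2 : (∫ σ in (0:ℝ)..s, (F σ).2) = ∫ σ in (0:ℝ)..s, f ((ζ σ).2) (υ2 σ) := by
        apply intervalIntegral.integral_congr
        intro σ hσ
        rw [uIcc_of_le hs.1] at hσ
        exact hF2eq σ ⟨hσ.1, le_trans hσ.2 hs.2⟩
      have h := congrArg Prod.snd (hζ' s hs.1)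
      rw [Prod.snd_add, h1, h2] at h
      exact h
    have hζ1int : IntervalIntegrable (fun σ => f ((ζ σ).1) (υ1 σ)) volume 0 τ := by
      have hcomp : IntervalIntegrable (fun σ => (F σ).1) volume 0 τ := by
        rw [intervalIntegrable_iff] at hFτ ⊢
        exact (ContinuousLinearMap.fst ℝ (Euc n) (Euc n)).integrable_comp hFτ
      rw [intervalIntegrable_iff] at hcomp ⊢
      apply hcomp.congr_fun _ measurableSet_uIoc
      intro σ hσ
      rw [uIoc_of_le hτmem.1] at hσ
      exact hF1eq σ ⟨le_of_lt hσ.1, hσ.2⟩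
    have hζ2int : IntervalIntegrable (fun σ => f ((ζ σ).2) (υ2 σ)) volume 0 τ := by
      have hcomp : IntervalIntegrable (fun σ => (F σ).2) volume 0 τ := by
        rw [intervalIntegrable_iff] at hFτ ⊢
        exact (ContinuousLinearMap.snd ℝ (Euc n) (Euc n)).integrable_comp hFτ
      rw [intervalIntegrable_iff] at hcomp ⊢
      apply hcomp.congr_fun _ measurableSet_uIoc
      intro σ hσ
      rw [uIoc_of_le hτmem.1] at hσ
      exact hF2eq σ ⟨le_of_lt hσ.1, hσ.2⟩
    -- bounds on the inputs
    obtain ⟨C, hC⟩ := hωloc τ hτpos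
    have hmeasf : ∀ (υ : ℝ → Euc m), Measurable υ → (∀ s, υ s ∈ U) →
        ∀ x : Euc n, Measurable fun σ => f x (υ σ) := by
      intro υ hm hmem x
      have hfx : ContinuousOn (fun u : Euc m => f x u) U := by
        have h1 : Continuous fun u : Euc m => ((x, u) : Euc n × Euc m) :=
          continuous_const.prodMk continuous_id
        exact hsys.1.comp h1.continuousOn (fun u hu => ⟨trivial, hu⟩)
      -- use: f x (υ σ) = (f x ∘ sat) (υ σ) since sat (υ σ) = υ σ? not known.
      -- instead: restrict.
      have hfsat : Continuous fun u : Euc m => f x (sat u) :=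
        hfx.comp_continuous hsatcont (fun u => (hsat u).1)
      have hsatid : ∀ u ∈ U, sat u = u := by
        intro u hu
        have h := (hsat u).2 u hu
        rw [sub_self, norm_zero] at h
        have h2 : ‖sat u - u‖ = 0 := le_antisymm h (norm_nonneg _)
        have := norm_eq_zero.mp h2
        exact sub_eq_zero.mp this
      have : (fun σ => f x (υ σ)) = fun σ => f x (sat (υ σ)) := by
        funext σ
        rw [hsatid _ (hmem σ)]
      rw [this]
      exact hfsat.measurable.comp hm
    have hbd : ∀ (υ : ℝ → Euc m), (∀ s : ℝ, ‖υ s - υ1 s‖ ≤ 2 * ρ A) →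
        ∀ᵐ σ ∂(volume.restrict (Icc (0:ℝ) τ)), ‖υ σ‖ ≤ ‖sat 0‖ + (C + ρ A) + 2 * ρ A := by
      intro υ hcl2
      filter_upwards [hC, ae_restrict_mem measurableSet_Icc] with σ hσC hσmem
      have e1 : ‖υ1 σ - sat 0‖ ≤ ‖(ω (cl σ)).1 + θ σ • (ω (cl σ)).2‖ := by
        have h := hsatlip ((ω (cl σ)).1 + θ σ • (ω (cl σ)).2) 0
        simpa using h
      have e2 : ‖(ω (cl σ)).1‖ ≤ C := by
        rw [hclid σ hσmem]
        exact le_trans (norm_fst_le _) hσC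
      have e3 : ‖(ω (cl σ)).1 + θ σ • (ω (cl σ)).2‖ ≤ C + ρ A :=
        le_trans (norm_add_le _ _) (add_le_add e2 (hsmulbd σ))
      have e4 : ‖υ1 σ‖ ≤ ‖sat 0‖ + (C + ρ A) := by
        have h := norm_sub_norm_le (υ1 σ) (sat 0)
        have := le_trans e1 e3
        linarith
      have e5 := hcl2 σ
      have h := norm_sub_norm_le (υ σ) (υ1 σ)
      linarith
    have hbd1 : ∀ᵐ σ ∂(volume.restrict (Icc (0:ℝ) τ)),
        ‖υ1 σ‖ ≤ ‖sat 0‖ + (C + ρ A) + 2 * ρ A :=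
      hbd υ1 (fun s => by simpa using (by linarith [hρA0] : (0:ℝ) ≤ 2 * ρ A))
    have hbd2 : ∀ᵐ σ ∂(volume.restrict (Icc (0:ℝ) τ)),
        ‖υ2 σ‖ ≤ ‖sat 0‖ + (C + ρ A) + 2 * ρ A := by
      apply hbd υ2
      intro s
      have := hdiff s
      rwa [norm_sub_rev] at this
    -- identify ζ components with the trajectories ξ1, ξ2 on [0,τ]
    have hξ1eqζ : ∀ s ∈ Icc (0:ℝ) τ, ξ1 s = (ζ s).1 :=
      traj_ext f U hsys hUcl υ1 (fun s => (hsat _).1) (hmeasf υ1 hυ1meas (fun s => (hsat _).1))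
        τ (le_of_lt hτpos) _ hbd1 (fun σ => (ζ σ).1) ξ1 hζ1eq hζ1int
        (fun s hs => hξ1traj s hs) hξ10
    have hξ2eqζ : ∀ s ∈ Icc (0:ℝ) τ, ξ2 s = (ζ s).2 :=
      traj_ext f U hsys hUcl υ2 (fun s => (hsat _).1) (hmeasf υ2 hυ2meas (fun s => (hsat _).1))
        τ (le_of_lt hτpos) _ hbd2 (fun σ => (ζ σ).2) ξ2 hζ2eq hζ2int
        (fun s hs => hξ2traj s hs) hξ20
    -- apply the δ∃-ISS estimate
    have hest := hiss υ1 υ2 hadm1 hadm2 hsupne ξ1 ξ2 hξ1traj hξ2traj τ hτmem.1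
    rw [hξ10, hξ20, hξ1eqζ τ ⟨le_of_lt hτpos, le_rfl⟩, hξ2eqζ τ ⟨le_of_lt hτpos, le_rfl⟩] at hest
    have hβbound : β (g 0) τ < A := by
      rcases eq_or_lt_of_le (hgnn 0) with h0 | h0
      · have hz : β (g 0) τ = 0 := by
          rw [← h0]
          exact (hβ.2.1 τ hτmem.1).2.1
        rw [hz]
        linarith
      · have hanti := (hβ.2.2 (g 0) h0).1
        have h1 : β (g 0) τ ≤ β (g 0) 0 :=
          hanti (mem_Ici.2 le_rfl) (mem_Ici.2 hτmem.1) hτmem.1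
        have h2 : β (g 0) 0 < β c 0 :=
          hβ0mono (mem_Ici.2 (le_of_lt h0)) (mem_Ici.2 (le_of_lt hc0)) hc
        rw [hA]
        linarith
    have hγbound : γ (supDist υ1 υ2).toReal < A := by
      have h1 : γ (supDist υ1 υ2).toReal ≤ γ (2 * ρ A) :=
        hγmono _ _ ENNReal.toReal_nonneg hsupreal
      have h2 : γ (2 * ρ A) ≤ c / 4 := hργ c hc0
      rw [hA]
      have : c / 4 < β c 0 := by linarith
      linarith
    have hcontra : g τ < A := lt_of_le_of_lt hest (max_lt hβbound hγbound)
    linarith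
  -- conclude
  have hfinal : ∀ c : ℝ, g 0 < c → γ ‖(2 * ρ (g t)) • (ω t).2‖ ≤ c / 4 := by
    intro c hc
    have hc0 : 0 < c := lt_of_le_of_lt (hgnn 0) hc
    have hA0 : (0:ℝ) ≤ β c 0 := le_of_lt (lt_trans hc0 (hα c hc0))
    have hgtA := key c hc
    have hρgt0 : 0 ≤ ρ (g t) := hρnn _ (hgnn t)
    have h1 : ‖(2 * ρ (g t)) • (ω t).2‖ ≤ 2 * ρ (g t) := by
      rw [norm_smul, Real.norm_eq_abs, abs_of_nonneg (by linarith)]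
      have h2 := hω2 t
      nlinarith
    have h2 : ρ (g t) ≤ ρ (β c 0) := hρmono _ _ (hgnn t) hgtA
    calc γ ‖(2 * ρ (g t)) • (ω t).2‖ ≤ γ (2 * ρ (β c 0)) :=
          hγmono _ _ (norm_nonneg _) (by linarith)
      _ ≤ c / 4 := hργ c hc0
  by_contra hcon
  push_neg at hcon
  have hL : g 0 / 2 < γ ‖(2 * ρ (g t)) • (ω t).2‖ := hcon
  have h40 : g 0 < (g 0 + 4 * γ ‖(2 * ρ (g t)) • (ω t).2‖) / 2 := by
    have := hgnn 0; linarith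
  have := hfinal _ h40
  linarith
end
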